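/- Let n ≥ 1 and for 0 < ε < 1 set p₀(ε) = ε/2 + (1−ε)/2^n and I(ε) = 1 − p₀(ε) · h((1/(2p₀(ε)))(ε + (1−ε)/2^n)) − (1−p₀(ε)) · h(((1−ε)/(2(1−p₀(ε))))(1 − 1/2^n)). Then lim_{ε → 0⁺} I(ε)/ε² = 2^(2n) / (8 (2^n − 1) ln 2). -/

import Mathlib

open Filter Topology


/-- The binary entropy function `h(q) = -q log₂ q - (1-q) log₂ (1-q)`
(with `0 log₂ 0 = 0`, which holds by the junk-value convention `Real.logb 2 0 = 0`). -/
noncomputable def binEntropy (q : ℝ) : ℝ :=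
  -q * Real.logb 2 q - (1 - q) * Real.logb 2 (1 - q)

/-- `p₀(ε) = ε/2 + (1-ε)/2^n`, the probability of outcome `z = 0` for a
Deutsch–Jozsa query with pseudo-pure input of purity `ε` and `p = 1/2`. -/
noncomputable def djP0 (n : ℕ) (ε : ℝ) : ℝ := ε / 2 + (1 - ε) / 2 ^ n

/-- The mutual information gained by a single Deutsch–Jozsa quantum query with a
pseudo-pure state of purity `ε`, when the a priori probability of a constant
function is `1/2`. -/
noncomputable def djInfo (n : ℕ) (ε : ℝ) : ℝ :=
  1 - djP0 n ε * binEntropy (1 / (2 * djP0 n ε) * (ε + (1 - ε) / 2 ^ n))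
    - (1 - djP0 n ε) * binEntropy ((1 - ε) / (2 * (1 - djP0 n ε)) * (1 - 1 / 2 ^ n))

lemma log1p_lim : Tendsto (fun u : ℝ => Real.log (1+u) / u) (𝓝[≠] 0) (𝓝 1) := by
  have h : HasDerivAt (fun x : ℝ => Real.log (1+x)) 1 0 := by
    have h1 : HasDerivAt (fun x : ℝ => 1 + x) 1 0 := (hasDerivAt_id (0:ℝ)).const_add 1
    have := (Real.hasDerivAt_log (x := (1:ℝ)+0) (by norm_num)).comp 0 h1
    simp only [add_zero, inv_one, one_mul] at this
    exact this
  have := hasDerivAt_iff_tendsto_slope.mp h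
  refine this.congr (fun u => ?_)
  simp [slope_def_field]

lemma phi_lim : Tendsto (fun t : ℝ => ((1+t)*Real.log (1+t) + (1-t)*Real.log (1-t))/t^2)
    (𝓝[>] (0:ℝ)) (𝓝 1) := by
  have hsub : 𝓝[>] (0:ℝ) ≤ 𝓝[≠] (0:ℝ) :=
    nhdsWithin_mono 0 (fun x hx => ne_of_gt hx)
  have hneg : Tendsto (fun t : ℝ => -t) (𝓝[>] (0:ℝ)) (𝓝[≠] (0:ℝ)) := by
    refine tendsto_nhdsWithin_of_tendsto_nhds_of_eventually_within _ ?_ ?_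
    · simpa using (continuous_neg.tendsto (0:ℝ)).mono_left nhdsWithin_le_nhds
    · exact eventually_nhdsWithin_of_forall fun t ht => by
        simp only [Set.mem_compl_iff, Set.mem_singleton_iff]
        exact neg_ne_zero.mpr (ne_of_gt ht)
  have hsq : Tendsto (fun t : ℝ => -t^2) (𝓝[>] (0:ℝ)) (𝓝[≠] (0:ℝ)) := by
    refine tendsto_nhdsWithin_of_tendsto_nhds_of_eventually_within _ ?_ ?_
    · have : Continuous (fun t : ℝ => -t^2) := by continuity
      simpa using (this.tendsto (0:ℝ)).mono_left nhdsWithin_le_nhds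
    · exact eventually_nhdsWithin_of_forall fun t ht => by
        simp only [Set.mem_compl_iff, Set.mem_singleton_iff]
        exact neg_ne_zero.mpr (pow_ne_zero 2 (ne_of_gt ht))
  have hmain : Tendsto (fun t : ℝ =>
      -(Real.log (1+(-t^2))/(-t^2)) + Real.log (1+t)/t + Real.log (1+(-t))/(-t))
      (𝓝[>] (0:ℝ)) (𝓝 (-1 + 1 + 1)) :=
    (((log1p_lim.comp hsq).neg).add (log1p_lim.mono_left hsub)).add (log1p_lim.comp hneg)
  have heq : (-1 + 1 + 1 : ℝ) = 1 := by norm_num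
  rw [heq] at hmain
  refine hmain.congr' ?_
  filter_upwards [Ioo_mem_nhdsGT_of_mem (Set.left_mem_Ico.mpr one_pos)] with t ht
  obtain ⟨ht0, ht1⟩ := ht
  have h1 : (0:ℝ) < 1 + t := by linarith
  have h2 : (0:ℝ) < 1 - t := by linarith
  have hlog : Real.log (1 + (-t^2)) = Real.log (1+t) + Real.log (1-t) := by
    rw [show (1:ℝ) + (-t^2) = (1+t)*(1-t) by ring, Real.log_mul h1.ne' h2.ne']
  rw [hlog, show (1:ℝ) + (-t) = 1 - t by ring]
  have ht0' : t ≠ 0 := ne_of_gt ht0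
  field_simp
  ring

lemma binEntropy_half (t : ℝ) (h1 : -1 < t) (h2 : t < 1) :
    binEntropy ((1+t)/2)
      = 1 - (1/(2*Real.log 2)) * ((1+t)*Real.log (1+t) + (1-t)*Real.log (1-t)) := by
  unfold binEntropy
  have hp : (0:ℝ) < 1+t := by linarith
  have hq : (0:ℝ) < 1-t := by linarith
  rw [show (1:ℝ) - (1+t)/2 = (1-t)/2 by ring]
  rw [Real.logb, Real.logb, Real.log_div hp.ne' two_ne_zero, Real.log_div hq.ne' two_ne_zero]
  have hl2 : Real.log 2 ≠ 0 := (Real.log_pos (by norm_num)).ne'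
  field_simp
  ring

lemma djInfo_eq (n : ℕ) (hn : 1 ≤ n) (ε : ℝ) (h0 : 0 < ε) (h1 : ε < 1) :
    djInfo n ε = (1/(2*Real.log 2)) *
      (djP0 n ε * ((1 + ε/(2*djP0 n ε))*Real.log (1 + ε/(2*djP0 n ε))
          + (1 - ε/(2*djP0 n ε))*Real.log (1 - ε/(2*djP0 n ε)))
       + (1 - djP0 n ε) * ((1 + ε/(2*(1-djP0 n ε)))*Real.log (1 + ε/(2*(1-djP0 n ε)))
          + (1 - ε/(2*(1-djP0 n ε)))*Real.log (1 - ε/(2*(1-djP0 n ε))))) := by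
  have ha0 : (0:ℝ) < (2:ℝ)^n := by positivity
  have ha : (1:ℝ)/2^n ≤ 1/2 := by
    apply div_le_div_of_nonneg_left (by norm_num) (by norm_num)
    calc (2:ℝ) = 2^1 := by norm_num
    _ ≤ 2^n := pow_le_pow_right₀ (by norm_num) hn
  set a : ℝ := (1:ℝ)/2^n with ha_def
  have ha0' : 0 < a := by positivity
  set p : ℝ := djP0 n ε with hp_def
  have hpa : p = ε/2 + (1-ε)*a := by rw [hp_def, ha_def]; unfold djP0; ring
  have hp0 : 0 < p := by rw [hpa]; nlinarith
  have hp1 : p ≤ 1/2 := by rw [hpa]; nlinarith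
  have hq0 : 0 < 1 - p := by linarith
  set t₁ : ℝ := ε/(2*p) with ht1_def
  set t₂ : ℝ := ε/(2*(1-p)) with ht2_def
  have ht10 : 0 < t₁ := by positivity
  have ht11 : t₁ < 1 := by
    rw [ht1_def, div_lt_one (by linarith)]
    nlinarith
  have ht20 : 0 < t₂ := by positivity
  have ht21 : t₂ < 1 := by
    rw [ht2_def, div_lt_one (by linarith)]
    linarith
  have harg1 : 1 / (2 * p) * (ε + (1 - ε) / 2 ^ n) = (1 + t₁)/2 := by
    rw [ht1_def]
    have : (1-ε)/2^n = (1-ε)*a := by rw [ha_def]; ring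
    rw [this]
    field_simp
    nlinarith [hpa]
  have harg2 : (1 - ε) / (2 * (1 - p)) * (1 - 1 / 2 ^ n) = (1 + (-t₂))/2 := by
    rw [ht2_def]
    have h1a : (1:ℝ) - 1/2^n = 1 - a := by rw [ha_def]
    rw [h1a]
    have key : (1-ε)*(1-a) = (1-p) - ε/2 := by rw [hpa]; ring
    field_simp
    nlinarith [key]
  unfold djInfo
  rw [show 1 - djP0 n ε = 1 - p from rfl, show djP0 n ε = p from rfl, harg1, harg2,
    binEntropy_half t₁ (by linarith) ht11,
    binEntropy_half (-t₂) (by linarith) (by linarith)]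
  rw [show (1:ℝ) + -t₂ = 1 - t₂ by ring, show (1:ℝ) - -t₂ = 1 + t₂ by ring]
  ring

lemma alg_aux (L p ε X Y : ℝ) (hL : L ≠ 0) (hp : p ≠ 0) (hq : 1 - p ≠ 0) (hε : ε ≠ 0) :
    1/(2*L) * ((X/(ε/(2*p))^2)/(4*p) + (Y/(ε/(2*(1-p)))^2)/(4*(1-p)))
      = 1/(2*L) * (p*X + (1-p)*Y) / ε^2 := by
  field_simp
  ring

/-- As `ε → 0⁺`, `I(ε)/ε² → 2^(2n) / (8 (2^n - 1) ln 2)`: the information gained by one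
Deutsch–Jozsa query with a pseudo-pure state is `2^(2n) ε² / (8 (2^n - 1) ln 2) + O(ε³)`. -/
theorem dj_pps_information_asymptotics (n : ℕ) (hn : 1 ≤ n) :
    Filter.Tendsto (fun ε => djInfo n ε / ε ^ 2) (nhdsWithin 0 (Set.Ioi 0))
      (nhds ((2 : ℝ) ^ (2 * n) / (8 * ((2 : ℝ) ^ n - 1) * Real.log 2))) := by
  have hl2 : Real.log 2 ≠ 0 := (Real.log_pos (by norm_num)).ne'
  have h2n : (0:ℝ) < (2:ℝ)^n := by positivity
  have h2n1 : (1:ℝ) < (2:ℝ)^n := by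
    calc (1:ℝ) < 2^1 := by norm_num
    _ ≤ 2^n := pow_le_pow_right₀ (by norm_num) hn
  set a : ℝ := (1:ℝ)/2^n with ha_def
  have ha0 : 0 < a := by positivity
  have ha : a ≤ 1/2 := by
    rw [ha_def]
    apply div_le_div_of_nonneg_left (by norm_num) (by norm_num)
    calc (2:ℝ) = 2^1 := by norm_num
    _ ≤ 2^n := pow_le_pow_right₀ (by norm_num) hn
  -- continuity of p₀
  have hpcont : Tendsto (fun ε => djP0 n ε) (𝓝[>] (0:ℝ)) (𝓝 a) := by
    have hc : Continuous (djP0 n) := by unfold djP0; continuity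
    have := (hc.tendsto 0).mono_left (nhdsWithin_le_nhds (s := Set.Ioi (0:ℝ)))
    convert this using 2; simp [djP0, ha_def]
  have hqcont : Tendsto (fun ε => 1 - djP0 n ε) (𝓝[>] (0:ℝ)) (𝓝 (1 - a)) :=
    tendsto_const_nhds.sub hpcont
  -- eventual positivity facts
  have hev : ∀ᶠ ε in 𝓝[>] (0:ℝ), ε ∈ Set.Ioo (0:ℝ) 1 :=
    Ioo_mem_nhdsGT_of_mem (Set.left_mem_Ico.mpr one_pos)
  have hppos : ∀ ε : ℝ, ε ∈ Set.Ioo (0:ℝ) 1 → 0 < djP0 n ε := by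
    intro ε hε
    have h1 : 0 < (1-ε)/2^n := div_pos (by linarith [hε.2]) h2n
    have : djP0 n ε = ε/2 + (1-ε)/2^n := rfl
    linarith [hε.1]
  have hqpos : ∀ ε : ℝ, ε ∈ Set.Ioo (0:ℝ) 1 → 0 < 1 - djP0 n ε := by
    intro ε hε
    have hpa : djP0 n ε = ε/2 + (1-ε)*a := by unfold djP0; rw [ha_def]; ring
    have : djP0 n ε ≤ 1/2 := by rw [hpa]; nlinarith [hε.1, hε.2]
    linarith
  -- t₁ and t₂ tend to 0 from the right
  have ht1 : Tendsto (fun ε : ℝ => ε/(2*djP0 n ε)) (𝓝[>] (0:ℝ)) (𝓝[>] (0:ℝ)) := by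
    refine tendsto_nhdsWithin_of_tendsto_nhds_of_eventually_within _ ?_ ?_
    · have := (tendsto_id.mono_left (nhdsWithin_le_nhds (s := Set.Ioi (0:ℝ)))).div
        (hpcont.const_mul 2) (by positivity)
      simpa [Pi.div_def] using this
    · filter_upwards [hev] with ε hε
      exact div_pos hε.1 (by linarith [hppos ε hε])
  have ht2 : Tendsto (fun ε : ℝ => ε/(2*(1-djP0 n ε))) (𝓝[>] (0:ℝ)) (𝓝[>] (0:ℝ)) := by
    refine tendsto_nhdsWithin_of_tendsto_nhds_of_eventually_within _ ?_ ?_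
    · have h1a : (0:ℝ) < 1 - a := by linarith
      have := (tendsto_id.mono_left (nhdsWithin_le_nhds (s := Set.Ioi (0:ℝ)))).div
        (hqcont.const_mul 2) (by positivity)
      simpa [Pi.div_def] using this
    · filter_upwards [hev] with ε hε
      exact div_pos hε.1 (by linarith [hqpos ε hε])
  have l1 := phi_lim.comp ht1
  have l2 := phi_lim.comp ht2
  have h4a : (4:ℝ)*a ≠ 0 := by positivity
  have h4a' : (4:ℝ)*(1-a) ≠ 0 := by
    have : (0:ℝ) < 1 - a := by linarith
    positivity
  have hG := ((l1.div (hpcont.const_mul 4) h4a).add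
      (l2.div (hqcont.const_mul 4) h4a')).const_mul (1/(2*Real.log 2))
  have hval : 1/(2*Real.log 2) * (1/(4*a) + 1/(4*(1-a)))
      = (2:ℝ)^(2*n) / (8*((2:ℝ)^n - 1)*Real.log 2) := by
    rw [ha_def, show (2:ℝ)^(2*n) = ((2:ℝ)^n)^2 by rw [← pow_mul, mul_comm]]
    have h1 : (2:ℝ)^n - 1 ≠ 0 := by linarith
    have h2 : (1:ℝ) - 1/2^n ≠ 0 := by
      have : (0:ℝ) < 1 - 1/2^n := by
        rw [sub_pos, div_lt_one h2n]; exact h2n1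
      exact this.ne'
    field_simp
    ring
  rw [← hval]
  refine hG.congr' ?_
  filter_upwards [hev] with ε hε
  show 1 / (2 * Real.log 2) *
      (((fun t : ℝ => ((1 + t) * Real.log (1 + t) + (1 - t) * Real.log (1 - t)) / t ^ 2) ∘
          fun ε => ε / (2 * djP0 n ε)) ε / (4 * djP0 n ε) +
        ((fun t : ℝ => ((1 + t) * Real.log (1 + t) + (1 - t) * Real.log (1 - t)) / t ^ 2) ∘
          fun ε => ε / (2 * (1 - djP0 n ε))) ε / (4 * (1 - djP0 n ε))) = _
  simp only [Function.comp_apply]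
  rw [djInfo_eq n hn ε hε.1 hε.2]
  exact alg_aux (Real.log 2) (djP0 n ε) ε _ _ hl2 (hppos ε hε).ne' (hqpos ε hε).ne'
    hε.1.ne'
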